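/- Let q be a Lie algebra over a field of characteristic zero and ξ ∈ q* a point of the dual space such that q_ξ ∩ [q, q_ξ] = {0}. Then the stabilizer q_ξ is an abelian Lie subalgebra of q, and the normalizer of q_ξ in q equals the centralizer of q_ξ in q: n_q(q_ξ) = z_q(q_ξ). -/
import Mathlib


/-- The coadjoint action of `x : L` on the dual space: `(coad k x f) y = - f ⁅x, y⁆`. -/
noncomputable def coad (k : Type*) {L : Type*} [Field k] [LieRing L] [LieAlgebra k L]
    (x : L) : Module.Dual k L →ₗ[k] Module.Dual k L where
  toFun f := -(f ∘ₗ (LieAlgebra.ad k L x : L →ₗ[k] L))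
  map_add' f g := by ext y; simp [add_comm]
  map_smul' c f := by ext y; simp

/-- For `ξ` in the dual space, the linear map `z ↦ z · ξ` (coadjoint action on `ξ`);
its range is the tangent space `q·ξ` of the coadjoint orbit and its kernel is the
stabiliser `q_ξ`. -/
noncomputable def coadOrbitMap (k : Type*) {L : Type*} [Field k] [LieRing L] [LieAlgebra k L]
    (ξ : Module.Dual k L) : L →ₗ[k] Module.Dual k L where
  toFun z := coad k z ξ
  map_add' z w := by ext y; simp [coad, add_comm]
  map_smul' c z := by ext y; simp [coad]

/-- Let `q` be a Lie algebra over a field of characteristic zero and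
`ξ ∈ q*` a point of the dual space such that `q_ξ ∩ [q, q_ξ] = {0}`. Then the
stabiliser `q_ξ` is abelian, and the normaliser of `q_ξ` in `q` equals the
centraliser of `q_ξ` in `q`. -/
theorem stabilizer_abelian_and_normalizer_eq_centralizer
    {k L : Type*} [Field k] [CharZero k] [LieRing L] [LieAlgebra k L]
    (ξ : Module.Dual k L)
    (h : ∀ w : L, coad k w ξ = 0 →
        w ∈ Submodule.span k {u : L | ∃ y z : L, coad k z ξ = 0 ∧ ⁅y, z⁆ = u} → w = 0) :
    (∀ y z : L, coad k y ξ = 0 → coad k z ξ = 0 → ⁅y, z⁆ = 0) ∧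
    {y : L | ∀ z : L, coad k z ξ = 0 → coad k ⁅y, z⁆ ξ = 0} =
      {y : L | ∀ z : L, coad k z ξ = 0 → ⁅y, z⁆ = 0} := by

  have key : ∀ y z : L, coad k y ξ = 0 → coad k z ξ = 0 → coad k ⁅y, z⁆ ξ = 0 := by
    intro y z hy hz
    ext w
    have hy' : ∀ v : L, ξ ⁅y, v⁆ = 0 := by
      intro v
      have := DFunLike.congr_fun hy v
      simpa [coad, LieAlgebra.ad, neg_eq_zero] using this
    have hz' : ∀ v : L, ξ ⁅z, v⁆ = 0 := by
      intro v
      have := DFunLike.congr_fun hz v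
      simpa [coad, LieAlgebra.ad, neg_eq_zero] using this
    have jac : ⁅⁅y, z⁆, w⁆ = ⁅y, ⁅z, w⁆⁆ - ⁅z, ⁅y, w⁆⁆ := lie_lie y z w
    simp [coad, LieAlgebra.ad, jac, map_sub, hy', hz']
  have mem_span : ∀ y z : L, coad k z ξ = 0 →
      ⁅y, z⁆ ∈ Submodule.span k {u : L | ∃ y z : L, coad k z ξ = 0 ∧ ⁅y, z⁆ = u} := by
    intro y z hz
    exact Submodule.subset_span ⟨y, z, hz, rfl⟩
  constructor
  · intro y z hy hz
    exact h _ (key y z hy hz) (mem_span y z hz)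
  · ext y
    constructor
    · intro hy z hz
      exact h _ (hy z hz) (mem_span y z hz)
    · intro hy z hz
      rw [hy z hz]
      simp [coad]
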